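/- In the Υ-setup, suppose additionally that d ≥ 2, that every column of Θ has Euclidean norm 1, and that Γ̄ is invertible. Then Υ₁ᵀΥ₂ + Υ₂ᵀΥ₁ is invertible, the matrix K := 2(Υ₀ᵀΥ₂)(Υ₁ᵀΥ₂ + Υ₂ᵀΥ₁)⁻¹(Υ₂ᵀΥ₀) is symmetric positive definite, and Γ̄* := Γ̄ K^{−1/2} satisfies (Γ̄*)ᵀ Γ̄* = I_d. Consequently, writing Γ̄* = (γ*_{ℓ,m}) (ℓ-th row, m-th column), one has ρ* := max_{k≠ℓ} |Σ_{m=1}^d γ*_{k,m} γ*_{ℓ,m}| / {(Σ_{m=1}^d (γ*_{k,m})²)^{1/2} (Σ_{m=1}^d (γ*_{ℓ,m})²)^{1/2}} = 0 and η* := max_{k≠ℓ} {1/Σ_{m=1}^d (γ*_{ℓ,m})² + 1/Σ_{m=1}^d (γ*_{k,m})²} = 2. -/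

import Mathlib

open Matrix

lemma sum_pair_eq_trace {d : ℕ} (A B : Matrix (Fin d) (Fin d) ℝ) :
    ∑ pr : Fin d × Fin d, A pr.1 pr.2 * B pr.1 pr.2 = (A * Bᵀ).trace := by
  simp [Matrix.trace, Matrix.mul_apply, Matrix.diag, Fintype.sum_prod_type]

lemma trace_mul_diagonal' {d : ℕ} (X : Matrix (Fin d) (Fin d) ℝ) (v : Fin d → ℝ) :
    (X * Matrix.diagonal v).trace = ∑ ℓ, X ℓ ℓ * v ℓ := by
  simp [Matrix.trace, Matrix.diag, Matrix.mul_apply, Matrix.diagonal_apply, Finset.mul_sum]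

theorem stmt13 (d : ℕ) (hd : 2 ≤ d)
    (Θ : Matrix (Fin d) (Fin d) ℝ) (hΘ : IsUnit Θ.det)
    (hΘcol : ∀ ℓ, ∑ i, Θ i ℓ ^ 2 = 1)
    (γ : Fin d → Fin d → ℝ) (φ : Fin d → ℝ)
    (Γbar : Matrix (Fin d) (Fin d) ℝ) (hΓbar : Γbar = Matrix.of fun ℓ m => γ m ℓ)
    (hΓinv : IsUnit Γbar.det)
    (Γdag : Matrix (Fin d) (Fin d) ℝ) (hΓdag : Γdag = ∑ m, φ m • Matrix.diagonal (γ m))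
    (hΓdaginv : IsUnit Γdag.det)
    (Hm : Fin d → Matrix (Fin d) (Fin d) ℝ)
    (hHm : ∀ m, Hm m = Θ * Matrix.diagonal (γ m) * Θᵀ)
    (H : Matrix (Fin d) (Fin d) ℝ) (hH : H = ∑ m, φ m • Hm m)
    (Υ₀ Υ₁ Υ₂ : Matrix (Fin d × Fin d) (Fin d) ℝ)
    (hΥ₀ : ∀ pr m, Υ₀ pr m = Hm m pr.1 pr.2)
    (hΥ₁ : ∀ pr m, Υ₁ pr m = (H⁻¹ * Hm m) pr.1 pr.2)
    (hΥ₂ : ∀ pr m, Υ₂ pr m = (Hm m * H⁻¹) pr.1 pr.2)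
    (Kmat : Matrix (Fin d) (Fin d) ℝ)
    (hK : Kmat = (2 : ℝ) • (Υ₀ᵀ * Υ₂ * (Υ₁ᵀ * Υ₂ + Υ₂ᵀ * Υ₁)⁻¹ * (Υ₂ᵀ * Υ₀))) :
    IsUnit (Υ₁ᵀ * Υ₂ + Υ₂ᵀ * Υ₁).det ∧
    Kmat.PosDef ∧
    ∀ S : Matrix (Fin d) (Fin d) ℝ, S.PosDef → S * S = Kmat →
      ∀ G : Matrix (Fin d) (Fin d) ℝ, G = Γbar * S⁻¹ →
        Gᵀ * G = 1 ∧
        (∀ k ℓ : Fin d, k ≠ ℓ →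
          |∑ m, G k m * G ℓ m| /
            (Real.sqrt (∑ m, G k m ^ 2) * Real.sqrt (∑ m, G ℓ m ^ 2)) = 0) ∧
        (∀ k ℓ : Fin d, k ≠ ℓ →
          1 / (∑ m, G ℓ m ^ 2) + 1 / (∑ m, G k m ^ 2) = 2) := by
  classical
  set g : Fin d → ℝ := fun ℓ => ∑ m, φ m * γ m ℓ with hg_def
  have hΓdag_diag : Γdag = Matrix.diagonal g := by
    rw [hΓdag]
    ext i j
    by_cases h : i = j
    · subst h
      simp [Matrix.sum_apply, g]
    · simp [Matrix.sum_apply, Matrix.diagonal_apply_ne _ h, h]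
  have hg : ∀ ℓ, g ℓ ≠ 0 := by
    have : IsUnit (∏ ℓ, g ℓ) := by
      rw [hΓdag_diag, Matrix.det_diagonal] at hΓdaginv
      exact hΓdaginv
    intro ℓ
    intro h0
    rw [isUnit_iff_ne_zero] at this
    exact this (Finset.prod_eq_zero (Finset.mem_univ ℓ) h0)
  have hΘT : IsUnit Θᵀ.det := by rwa [Matrix.det_transpose]
  have hΔ : IsUnit (Matrix.diagonal g).det := by
    rw [Matrix.det_diagonal, isUnit_iff_ne_zero]
    exact Finset.prod_ne_zero_iff.2 fun ℓ _ => hg ℓ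
  have hH' : H = Θ * Matrix.diagonal g * Θᵀ := by
    rw [hH]
    have h1 : ∀ m ∈ Finset.univ, φ m • Hm m
        = Θ * (φ m • Matrix.diagonal (γ m)) * Θᵀ := by
      intro m _
      rw [hHm, Matrix.mul_smul, Matrix.smul_mul]
    rw [Finset.sum_congr rfl h1, ← Finset.sum_mul, ← Matrix.mul_sum, ← hΓdag, hΓdag_diag]
  have hHdet : IsUnit H.det := by
    rw [hH', Matrix.det_mul, Matrix.det_mul]
    exact (hΘ.mul hΔ).mul hΘT
  have hDg : Matrix.diagonal g * Matrix.diagonal (fun ℓ => (g ℓ)⁻¹) = 1 := by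
    rw [Matrix.diagonal_mul_diagonal]
    rw [show (fun ℓ => g ℓ * (g ℓ)⁻¹) = fun _ => (1:ℝ) from funext fun ℓ => mul_inv_cancel₀ (hg ℓ)]
    exact Matrix.diagonal_one
  have hHinv : H⁻¹ = Θᵀ⁻¹ * Matrix.diagonal (fun ℓ => (g ℓ)⁻¹) * Θ⁻¹ := by
    apply Matrix.inv_eq_right_inv
    rw [hH']
    simp only [Matrix.mul_assoc]
    rw [Matrix.mul_nonsing_inv_cancel_left _ _ hΘT, ← Matrix.mul_assoc (Matrix.diagonal g),
      hDg, Matrix.one_mul, Matrix.mul_nonsing_inv _ hΘ]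
  set D : Fin d → Matrix (Fin d) (Fin d) ℝ :=
    fun m => Matrix.diagonal (fun ℓ => γ m ℓ * (g ℓ)⁻¹) with hD_def
  have hA : ∀ m, H⁻¹ * Hm m = Θᵀ⁻¹ * D m * Θᵀ := by
    intro m
    rw [hHinv, hHm]
    calc Θᵀ⁻¹ * Matrix.diagonal (fun ℓ => (g ℓ)⁻¹) * Θ⁻¹ * (Θ * Matrix.diagonal (γ m) * Θᵀ)
        = Θᵀ⁻¹ * (Matrix.diagonal (fun ℓ => (g ℓ)⁻¹) * (Θ⁻¹ * (Θ * (Matrix.diagonal (γ m) * Θᵀ)))) := by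
          simp only [Matrix.mul_assoc]
      _ = Θᵀ⁻¹ * (Matrix.diagonal (fun ℓ => (g ℓ)⁻¹) * (Matrix.diagonal (γ m) * Θᵀ)) := by
          rw [Matrix.nonsing_inv_mul_cancel_left _ _ hΘ]
      _ = Θᵀ⁻¹ * D m * Θᵀ := by
          rw [← Matrix.mul_assoc (Matrix.diagonal _), Matrix.diagonal_mul_diagonal, hD_def,
            show (fun ℓ => (g ℓ)⁻¹ * γ m ℓ) = fun ℓ => γ m ℓ * (g ℓ)⁻¹ from
              funext fun ℓ => mul_comm _ _]
          simp only [Matrix.mul_assoc]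
  have hB : ∀ m, Hm m * H⁻¹ = Θ * D m * Θ⁻¹ := by
    intro m
    rw [hHinv, hHm]
    calc Θ * Matrix.diagonal (γ m) * Θᵀ * (Θᵀ⁻¹ * Matrix.diagonal (fun ℓ => (g ℓ)⁻¹) * Θ⁻¹)
        = Θ * (Matrix.diagonal (γ m) * (Θᵀ * (Θᵀ⁻¹ * (Matrix.diagonal (fun ℓ => (g ℓ)⁻¹) * Θ⁻¹)))) := by
          simp only [Matrix.mul_assoc]
      _ = Θ * (Matrix.diagonal (γ m) * (Matrix.diagonal (fun ℓ => (g ℓ)⁻¹) * Θ⁻¹)) := by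
          rw [Matrix.mul_nonsing_inv_cancel_left _ _ hΘT]
      _ = Θ * D m * Θ⁻¹ := by
          rw [← Matrix.mul_assoc (Matrix.diagonal _), Matrix.diagonal_mul_diagonal, hD_def]
          simp only [Matrix.mul_assoc]
  set M : Matrix (Fin d) (Fin d) ℝ := Matrix.of (fun ℓ m => γ m ℓ * (g ℓ)⁻¹) with hM_def
  have hAT : ∀ m, (Θᵀ⁻¹ * D m * Θᵀ)ᵀ = Θ * D m * Θ⁻¹ := by
    intro m
    simp only [hD_def, Matrix.transpose_mul, Matrix.transpose_nonsing_inv,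
      Matrix.diagonal_transpose, Matrix.transpose_transpose, Matrix.mul_assoc]
  have hBT : ∀ m, (Θ * D m * Θ⁻¹)ᵀ = Θᵀ⁻¹ * D m * Θᵀ := by
    intro m
    simp only [hD_def, Matrix.transpose_mul, Matrix.transpose_nonsing_inv,
      Matrix.diagonal_transpose, Matrix.transpose_transpose, Matrix.mul_assoc]
  have htraceDD : ∀ m n, ((Θᵀ⁻¹ * D m * Θᵀ) * (Θᵀ⁻¹ * D n * Θᵀ)).trace
      = ∑ ℓ, (γ m ℓ * (g ℓ)⁻¹) * (γ n ℓ * (g ℓ)⁻¹) := by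
    intro m n
    have : (Θᵀ⁻¹ * D m * Θᵀ) * (Θᵀ⁻¹ * D n * Θᵀ) = Θᵀ⁻¹ * (D m * D n) * Θᵀ := by
      calc (Θᵀ⁻¹ * D m * Θᵀ) * (Θᵀ⁻¹ * D n * Θᵀ)
          = Θᵀ⁻¹ * (D m * (Θᵀ * (Θᵀ⁻¹ * (D n * Θᵀ)))) := by simp only [Matrix.mul_assoc]
        _ = Θᵀ⁻¹ * (D m * (D n * Θᵀ)) := by rw [Matrix.mul_nonsing_inv_cancel_left _ _ hΘT]
        _ = Θᵀ⁻¹ * (D m * D n) * Θᵀ := by simp only [Matrix.mul_assoc]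
    rw [this, Matrix.trace_mul_comm, Matrix.mul_nonsing_inv_cancel_left _ _ hΘT,
      hD_def, Matrix.diagonal_mul_diagonal, Matrix.trace_diagonal]
  have hMTM : ∀ m n, (Mᵀ * M) m n = ∑ ℓ, (γ m ℓ * (g ℓ)⁻¹) * (γ n ℓ * (g ℓ)⁻¹) := by
    intro m n
    simp [Matrix.mul_apply, hM_def]
  have h12 : Υ₁ᵀ * Υ₂ = Mᵀ * M := by
    ext m n
    rw [Matrix.mul_apply]
    simp only [Matrix.transpose_apply, hΥ₁, hΥ₂]
    rw [sum_pair_eq_trace, hA, hB, hBT, htraceDD, hMTM]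
  have h21 : Υ₂ᵀ * Υ₁ = Mᵀ * M := by
    ext m n
    rw [Matrix.mul_apply]
    simp only [Matrix.transpose_apply, hΥ₂, hΥ₁]
    rw [sum_pair_eq_trace, hA, hB, hAT]
    have : (Θ * D m * Θ⁻¹) * (Θ * D n * Θ⁻¹) = Θ * (D m * D n) * Θ⁻¹ := by
      calc (Θ * D m * Θ⁻¹) * (Θ * D n * Θ⁻¹)
          = Θ * (D m * (Θ⁻¹ * (Θ * (D n * Θ⁻¹)))) := by simp only [Matrix.mul_assoc]
        _ = Θ * (D m * (D n * Θ⁻¹)) := by rw [Matrix.nonsing_inv_mul_cancel_left _ _ hΘ]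
        _ = Θ * (D m * D n) * Θ⁻¹ := by simp only [Matrix.mul_assoc]
    rw [this, Matrix.trace_mul_comm, Matrix.nonsing_inv_mul_cancel_left _ _ hΘ,
      hD_def, Matrix.diagonal_mul_diagonal, Matrix.trace_diagonal, hMTM]
  have h02 : Υ₀ᵀ * Υ₂ = Γbarᵀ * M := by
    ext m n
    rw [Matrix.mul_apply]
    simp only [Matrix.transpose_apply, hΥ₀, hΥ₂]
    rw [sum_pair_eq_trace, hB, hBT, hHm]
    have : Θ * Matrix.diagonal (γ m) * Θᵀ * (Θᵀ⁻¹ * D n * Θᵀ)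
        = Θ * (Matrix.diagonal (γ m) * D n) * Θᵀ := by
      calc Θ * Matrix.diagonal (γ m) * Θᵀ * (Θᵀ⁻¹ * D n * Θᵀ)
          = Θ * (Matrix.diagonal (γ m) * (Θᵀ * (Θᵀ⁻¹ * (D n * Θᵀ)))) := by
            simp only [Matrix.mul_assoc]
        _ = Θ * (Matrix.diagonal (γ m) * (D n * Θᵀ)) := by
            rw [Matrix.mul_nonsing_inv_cancel_left _ _ hΘT]
        _ = Θ * (Matrix.diagonal (γ m) * D n) * Θᵀ := by simp only [Matrix.mul_assoc]
    rw [this, Matrix.trace_mul_comm, ← Matrix.mul_assoc, hD_def, Matrix.diagonal_mul_diagonal,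
      trace_mul_diagonal']
    have hcol : ∀ ℓ, (Θᵀ * Θ) ℓ ℓ = 1 := by
      intro ℓ
      rw [Matrix.mul_apply]
      simpa [sq] using hΘcol ℓ
    simp only [hcol, one_mul]
    rw [Matrix.mul_apply]
    simp only [Matrix.transpose_apply, hΓbar, hM_def, Matrix.of_apply]
  have h20 : Υ₂ᵀ * Υ₀ = Mᵀ * Γbar := by
    have := congrArg Matrix.transpose h02
    rw [Matrix.transpose_mul, Matrix.transpose_mul, Matrix.transpose_transpose,
      Matrix.transpose_transpose] at this
    exact this
  have hMdiag : M = Matrix.diagonal (fun ℓ => (g ℓ)⁻¹) * Γbar := by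
    ext ℓ m
    rw [Matrix.diagonal_mul]
    simp [hM_def, hΓbar, mul_comm]
  have hMdet : IsUnit M.det := by
    rw [hMdiag, Matrix.det_mul, Matrix.det_diagonal]
    refine IsUnit.mul ?_ hΓinv
    rw [isUnit_iff_ne_zero]
    exact Finset.prod_ne_zero_iff.2 fun ℓ _ => inv_ne_zero (hg ℓ)
  have hMTdet : IsUnit Mᵀ.det := by rwa [Matrix.det_transpose]
  have hsum : Υ₁ᵀ * Υ₂ + Υ₂ᵀ * Υ₁ = (2:ℝ) • (Mᵀ * M) := by
    rw [h12, h21, two_smul]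
  have hsumdet : IsUnit (Υ₁ᵀ * Υ₂ + Υ₂ᵀ * Υ₁).det := by
    rw [hsum, Matrix.det_smul, Matrix.det_mul, isUnit_iff_ne_zero]
    refine mul_ne_zero (pow_ne_zero _ two_ne_zero) ?_
    exact mul_ne_zero (isUnit_iff_ne_zero.1 hMTdet) (isUnit_iff_ne_zero.1 hMdet)
  have hinv : ((2:ℝ) • (Mᵀ * M))⁻¹ = (2:ℝ)⁻¹ • (M⁻¹ * Mᵀ⁻¹) := by
    apply Matrix.inv_eq_right_inv
    rw [Matrix.smul_mul, Matrix.mul_smul, smul_smul]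
    have h2 : (2:ℝ) * 2⁻¹ = 1 := by norm_num
    rw [h2, one_smul]
    simp only [Matrix.mul_assoc]
    rw [Matrix.mul_nonsing_inv_cancel_left _ _ hMdet, Matrix.mul_nonsing_inv _ hMTdet]
  have hKΓ : Kmat = Γbarᵀ * Γbar := by
    rw [hK, hsum, h02, h20, hinv]
    rw [Matrix.mul_smul, Matrix.smul_mul, smul_smul]
    have h2 : (2:ℝ) * 2⁻¹ = 1 := by norm_num
    rw [h2, one_smul]
    calc Γbarᵀ * M * (M⁻¹ * Mᵀ⁻¹) * (Mᵀ * Γbar)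
        = Γbarᵀ * (M * (M⁻¹ * (Mᵀ⁻¹ * (Mᵀ * Γbar)))) := by simp only [Matrix.mul_assoc]
      _ = Γbarᵀ * Γbar := by
          rw [Matrix.nonsing_inv_mul_cancel_left _ _ hMTdet,
            Matrix.mul_nonsing_inv_cancel_left _ _ hMdet]
  have hΓunit : IsUnit Γbar := (Matrix.isUnit_iff_isUnit_det _).2 hΓinv
  have hKpd : Kmat.PosDef := by
    rw [hKΓ, Matrix.posDef_iff_dotProduct_mulVec]
    constructor
    · rw [Matrix.IsHermitian, Matrix.conjTranspose_eq_transpose_of_trivial,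
        Matrix.transpose_mul, Matrix.transpose_transpose]
    · intro x hx
      have hΓx : Γbar *ᵥ x ≠ 0 := by
        intro h0
        apply hx
        have hinj := Matrix.mulVec_injective_iff_isUnit.2 hΓunit
        apply hinj
        rw [h0, Matrix.mulVec_zero]
      have : star x ⬝ᵥ (Γbarᵀ * Γbar) *ᵥ x = (Γbar *ᵥ x) ⬝ᵥ (Γbar *ᵥ x) := by
        rw [star_trivial, ← Matrix.mulVec_mulVec, Matrix.dotProduct_mulVec,
          Matrix.vecMul_transpose]
      rw [this]
      rcases lt_or_eq_of_le (Finset.sum_nonneg fun i _ =>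
        mul_self_nonneg ((Γbar *ᵥ x) i) : (0:ℝ) ≤ (Γbar *ᵥ x) ⬝ᵥ (Γbar *ᵥ x)) with h | h
      · exact h
      · exact absurd (dotProduct_self_eq_zero.1 h.symm) hΓx
  refine ⟨hsumdet, hKpd, ?_⟩
  intro S hS hSS G hG
  have hSsym : Sᵀ = S := by
    have := hS.1
    rwa [Matrix.IsHermitian, Matrix.conjTranspose_eq_transpose_of_trivial] at this
  have hSdet : IsUnit S.det := hS.det_pos.ne'.isUnit
  have hGG : Gᵀ * G = 1 := by
    rw [hG, Matrix.transpose_mul, Matrix.transpose_nonsing_inv, hSsym]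
    have hΓΓ : Γbarᵀ * Γbar = S * S := by rw [← hKΓ, hSS]
    calc S⁻¹ * Γbarᵀ * (Γbar * S⁻¹)
        = S⁻¹ * (Γbarᵀ * Γbar) * S⁻¹ := by simp only [Matrix.mul_assoc]
      _ = S⁻¹ * (S * S) * S⁻¹ := by rw [hΓΓ]
      _ = 1 := by
          rw [← Matrix.mul_assoc, Matrix.nonsing_inv_mul _ hSdet,
            Matrix.one_mul, Matrix.mul_nonsing_inv _ hSdet]
  have hGGT : G * Gᵀ = 1 := mul_eq_one_comm.1 hGG
  have hentry : ∀ k ℓ, ∑ m, G k m * G ℓ m = (1 : Matrix (Fin d) (Fin d) ℝ) k ℓ := by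
    intro k ℓ
    rw [← hGGT, Matrix.mul_apply]
    simp [Matrix.transpose_apply]
  have hdiag : ∀ ℓ, ∑ m, G ℓ m ^ 2 = 1 := by
    intro ℓ
    have := hentry ℓ ℓ
    rw [Matrix.one_apply_eq] at this
    rw [← this]
    exact Finset.sum_congr rfl fun m _ => sq (G ℓ m)
  refine ⟨hGG, ?_, ?_⟩
  · intro k ℓ hkℓ
    have := hentry k ℓ
    rw [Matrix.one_apply_ne hkℓ] at this
    rw [this]
    simp
  · intro k ℓ _
    rw [hdiag, hdiag]
    norm_num
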